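/- Let M be a Fisher market in which every buyer i has a CES utility with parameter ρ_i < 1, ρ_i ≠ 0; let ρ := max_i ρ_i, θ := max{ρ/(1−ρ), 1}, and E := max{1/(1−ρ), 1}. Let p be a positive price vector, let r ≥ 1, and let p' be any positive price vector with p_k/r ≤ p'_k ≤ r·p_k for every good k. Then for every good j, ∑_{k ≠ j} |∂²φ/∂p_j∂p_k(p')|·p_k ≤ θ·r^{2E}·x_j(p), where x_j(p) is the total demand for good j at prices p. -/

import Mathlib

open Finset

/-- The CES utility `u(x) = (∑_j a_j x_j^ρ)^{1/ρ}`. -/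
noncomputable def cesUtil {n : ℕ} (a : Fin n → ℝ) (ρ : ℝ) (x : Fin n → ℝ) : ℝ :=
  (∑ j, a j * x j ^ ρ) ^ (1 / ρ)

/-- The budget set `{x ≥ 0 : p·x ≤ e}`. -/
def budgetSet {n : ℕ} (p : Fin n → ℝ) (e : ℝ) : Set (Fin n → ℝ) :=
  {x | (∀ j, 0 ≤ x j) ∧ ∑ j, p j * x j ≤ e}

/-- `x` is a demand of a buyer with CES utility `(a, ρ)` and budget `e` at prices `p`:
it is a utility-maximizing affordable bundle. -/
def IsDemand {n : ℕ} (a : Fin n → ℝ) (ρ : ℝ) (p : Fin n → ℝ) (e : ℝ)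
    (x : Fin n → ℝ) : Prop :=
  x ∈ budgetSet p e ∧ ∀ y ∈ budgetSet p e, cesUtil a ρ y ≤ cesUtil a ρ x

/-- A Fisher market with `n` goods (each of unit supply) and `m` buyers having CES
utilities: buyer `i` has coefficients `a i` (non-negative, not all zero), parameter
`ρ i < 1`, `ρ i ≠ 0`, budget `e i > 0`, and at every positive price vector her demand
`x p i` is the unique utility maximizer over her budget set. -/
structure CESMarket (n m : ℕ) where
  a : Fin m → Fin n → ℝ
  ρ : Fin m → ℝ
  e : Fin m → ℝ
  a_nonneg : ∀ i j, 0 ≤ a i j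
  a_ne_zero : ∀ i, ∃ j, a i j ≠ 0
  e_pos : ∀ i, 0 < e i
  ρ_lt_one : ∀ i, ρ i < 1
  ρ_ne_zero : ∀ i, ρ i ≠ 0
  x : (Fin n → ℝ) → Fin m → Fin n → ℝ
  x_isDemand : ∀ p, (∀ j, 0 < p j) → ∀ i, IsDemand (a i) (ρ i) p (e i) (x p i)
  x_unique : ∀ p, (∀ j, 0 < p j) → ∀ i y, IsDemand (a i) (ρ i) p (e i) y → y = x p i

/-- Total demand for good `j` at prices `p`. -/
noncomputable def totalDemand {n m : ℕ} (M : CESMarket n m) (p : Fin n → ℝ)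
    (j : Fin n) : ℝ :=
  ∑ i, M.x p i j

/-- Excess demand for good `j` at prices `p` (supply of each good is one unit). -/
noncomputable def cesExcess {n m : ℕ} (M : CESMarket n m) (p : Fin n → ℝ)
    (j : Fin n) : ℝ :=
  totalDemand M p j - 1

/-- `û_i(p)`: the optimal utility attainable with one unit of spending at prices `p`. -/
noncomputable def uhat {n : ℕ} (a : Fin n → ℝ) (ρ : ℝ) (p : Fin n → ℝ) : ℝ :=
  sSup (cesUtil a ρ '' budgetSet p 1)

/-- The convex potential `φ(p) = ∑_k p_k + ∑_i e_i · log û_i(p)`. -/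
noncomputable def phi {n m : ℕ} (M : CESMarket n m) (p : Fin n → ℝ) : ℝ :=
  ∑ k, p k + ∑ i, M.e i * Real.log (uhat (M.a i) (M.ρ i) p)

/-- `p` is a market equilibrium: prices are non-negative and there exist demands,
one for each buyer, under which every positively-priced good exactly clears and
every zero-priced good is not over-demanded. -/
def IsCESEquilibrium {n m : ℕ} (M : CESMarket n m) (p : Fin n → ℝ) : Prop :=
  (∀ j, 0 ≤ p j) ∧
  ∃ x : Fin m → Fin n → ℝ,
    (∀ i, IsDemand (M.a i) (M.ρ i) p (M.e i) (x i)) ∧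
    ∀ j, (0 < p j → ∑ i, x i j = 1) ∧ (p j = 0 → ∑ i, x i j ≤ 1)

/-- The partial derivative `∂F/∂p_k` of `F : ℝⁿ → ℝ` at `p`. -/
noncomputable def partialDeriv' {n : ℕ} (F : (Fin n → ℝ) → ℝ) (k : Fin n)
    (p : Fin n → ℝ) : ℝ :=
  fderiv ℝ F p (Pi.single k (1 : ℝ))

/-- The second partial derivative `∂²F/∂p_j∂p_k` of `F : ℝⁿ → ℝ` at `p`. -/
noncomputable def secondPartial {n : ℕ} (F : (Fin n → ℝ) → ℝ) (j k : Fin n)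
    (p : Fin n → ℝ) : ℝ :=
  partialDeriv' (partialDeriv' F k) j p

open Real

namespace Stmt8Aux

variable {n : ℕ}

noncomputable def bb (a : Fin n → ℝ) (ρ : ℝ) (j : Fin n) : ℝ := a j ^ (1/(1-ρ))

noncomputable def ss (ρ : ℝ) : ℝ := ρ / (1 - ρ)

noncomputable def gg (a : Fin n → ℝ) (ρ : ℝ) (p : Fin n → ℝ) : ℝ :=
  ∑ k, bb a ρ k * p k ^ (-(ss ρ))

noncomputable def dem (a : Fin n → ℝ) (ρ : ℝ) (e : ℝ) (p : Fin n → ℝ) (j : Fin n) : ℝ :=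
  e * (bb a ρ j * p j ^ (-(ss ρ) - 1)) / gg a ρ p

lemma ss_add_one {ρ : ℝ} (h : ρ < 1) : ss ρ + 1 = 1/(1-ρ) := by
  have h0 : (1:ℝ) - ρ ≠ 0 := by linarith
  field_simp [ss]
  unfold ss
  field_simp
  ring

lemma bb_nonneg {a : Fin n → ℝ} {ρ : ℝ} (ha : ∀ j, 0 ≤ a j) (j : Fin n) : 0 ≤ bb a ρ j :=
  Real.rpow_nonneg (ha j) _

lemma gg_pos {a : Fin n → ℝ} {ρ : ℝ} {p : Fin n → ℝ}
    (ha : ∀ j, 0 ≤ a j) (ha0 : ∃ j, a j ≠ 0) (hp : ∀ j, 0 < p j) :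
    0 < gg a ρ p := by
  obtain ⟨j, hj⟩ := ha0
  have haj : 0 < a j := lt_of_le_of_ne (ha j) (Ne.symm hj)
  refine Finset.sum_pos' (fun k _ => ?_) ⟨j, Finset.mem_univ j, ?_⟩
  · exact mul_nonneg (Real.rpow_nonneg (ha k) _) (Real.rpow_nonneg (hp k).le _)
  · exact mul_pos (Real.rpow_pos_of_pos haj _) (Real.rpow_pos_of_pos (hp j) _)

lemma dem_nonneg {a : Fin n → ℝ} {ρ : ℝ} {e : ℝ} {p : Fin n → ℝ}
    (ha : ∀ j, 0 ≤ a j) (he : 0 ≤ e) (hp : ∀ j, 0 < p j) (hg : 0 < gg a ρ p) (j : Fin n) :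
    0 ≤ dem a ρ e p j := by
  apply div_nonneg _ hg.le
  exact mul_nonneg he (mul_nonneg (Real.rpow_nonneg (ha j) _) (Real.rpow_nonneg (hp j).le _))

lemma price_mul_dem {a : Fin n → ℝ} {ρ : ℝ} {e : ℝ} {p : Fin n → ℝ}
    (hp : ∀ j, 0 < p j) (j : Fin n) :
    p j * dem a ρ e p j = e * (bb a ρ j * p j ^ (-(ss ρ))) / gg a ρ p := by
  have h : p j ^ (-(ss ρ) - 1) * p j = p j ^ (-(ss ρ)) := by
    rw [← Real.rpow_add_one (hp j).ne' (-(ss ρ) - 1)]; norm_num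
  rw [dem]
  field_simp
  rw [← h]; ring

lemma dem_budget {a : Fin n → ℝ} {ρ : ℝ} {e : ℝ} {p : Fin n → ℝ}
    (hp : ∀ j, 0 < p j) (hg : 0 < gg a ρ p) :
    ∑ j, p j * dem a ρ e p j = e := by
  rw [Finset.sum_congr rfl (fun j _ => price_mul_dem hp j), ← Finset.sum_div, ← Finset.mul_sum]
  rw [← gg, mul_div_assoc, div_self hg.ne', mul_one]

/-- two-term Hölder for sums over `Fin n` -/
lemma hoelder_sum (A B : Fin n → ℝ) {ρ : ℝ} (hρ : 0 < ρ) (hρ1 : ρ < 1)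
    (hA : ∀ l, 0 ≤ A l) (hB : ∀ l, 0 ≤ B l) :
    ∑ l, (A l) ^ ρ * (B l) ^ (1-ρ) ≤ (∑ l, A l) ^ ρ * (∑ l, B l) ^ (1-ρ) := by
  have h1ρ : 0 < 1 - ρ := by linarith
  have hpq : Real.HolderConjugate (1/ρ) (1/(1-ρ)) := by
    rw [Real.holderConjugate_iff]
    constructor
    · rw [lt_div_iff₀ hρ]; linarith
    · simp only [one_div, inv_inv]; ring
  have H := Real.inner_le_Lp_mul_Lq_of_nonneg (s := (Finset.univ : Finset (Fin n)))
      (f := fun l => A l ^ ρ) (g := fun l => B l ^ (1-ρ)) hpq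
      (fun l _ => Real.rpow_nonneg (hA l) _) (fun l _ => Real.rpow_nonneg (hB l) _)
  have e1 : ∀ l : Fin n, (A l ^ ρ) ^ (1/ρ) = A l := by
    intro l; rw [← Real.rpow_mul (hA l), mul_one_div_cancel hρ.ne', Real.rpow_one]
  have e2 : ∀ l : Fin n, (B l ^ (1-ρ)) ^ (1/(1-ρ)) = B l := by
    intro l; rw [← Real.rpow_mul (hB l), mul_one_div_cancel h1ρ.ne', Real.rpow_one]
  rw [Finset.sum_congr rfl (fun l _ => e1 l), Finset.sum_congr rfl (fun l _ => e2 l)] at H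
  simpa [one_div_one_div] using H

end Stmt8Aux

namespace Stmt8Aux

variable {n : ℕ}

lemma a_mul_bb_rpow {a : Fin n → ℝ} {ρ : ℝ} (hρ1 : ρ < 1) (hρ0 : ρ ≠ 0)
    (ha : ∀ j, 0 ≤ a j) (l : Fin n) :
    a l * (bb a ρ l) ^ ρ = bb a ρ l := by
  have h1ρ : (0:ℝ) < 1 - ρ := by linarith
  rcases eq_or_lt_of_le (ha l) with hz | hpos
  · rw [bb, ← hz, Real.zero_rpow (by simp [h1ρ.ne'] : (1:ℝ)/(1-ρ) ≠ 0), Real.zero_rpow hρ0]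
    ring
  · rw [bb, ← Real.rpow_mul (ha l)]
    have h1 : a l * a l ^ (1/(1-ρ)*ρ) = a l ^ ((1:ℝ)) * a l ^ (1/(1-ρ)*ρ) := by
      rw [Real.rpow_one]
    rw [h1, ← Real.rpow_add hpos]
    congr 1
    field_simp
    ring

lemma rpow_neg_ss_sub_one_rpow {x ρ : ℝ} (hx : 0 < x) (hρ1 : ρ < 1) :
    (x ^ (-(ss ρ) - 1)) ^ ρ = x ^ (-(ρ/(1-ρ)) * ρ - ρ) := by
  rw [← Real.rpow_mul hx.le]
  congr 1
  rw [ss]; ring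

lemma sum_a_dem {a : Fin n → ℝ} {ρ : ℝ} {e : ℝ} {p : Fin n → ℝ}
    (hρ1 : ρ < 1) (hρ0 : ρ ≠ 0) (ha : ∀ j, 0 ≤ a j) (hp : ∀ j, 0 < p j)
    (he : 0 ≤ e) (hg : 0 < gg a ρ p) :
    ∑ l, a l * (dem a ρ e p l) ^ ρ = e ^ ρ * gg a ρ p ^ (1-ρ) := by
  have h1ρ : (0:ℝ) < 1 - ρ := by linarith
  have key : ∀ l : Fin n, a l * (dem a ρ e p l) ^ ρ
      = (e / gg a ρ p) ^ ρ * (bb a ρ l * p l ^ (-(ss ρ))) := by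
    intro l
    have hd : dem a ρ e p l = (e / gg a ρ p) * (bb a ρ l * p l ^ (-(ss ρ) - 1)) := by
      rw [dem]; ring
    have hX : (0:ℝ) ≤ bb a ρ l * p l ^ (-(ss ρ) - 1) :=
      mul_nonneg (bb_nonneg ha l) (Real.rpow_nonneg (hp l).le _)
    rw [hd, Real.mul_rpow (div_nonneg he hg.le) hX,
      Real.mul_rpow (bb_nonneg ha l) (Real.rpow_nonneg (hp l).le _)]
    have hpl : (p l ^ (-(ss ρ) - 1)) ^ ρ = p l ^ (-(ss ρ)) := by
      rw [rpow_neg_ss_sub_one_rpow (hp l) hρ1]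
      congr 1
      rw [ss]
      field_simp
      ring
    rw [hpl]
    have := a_mul_bb_rpow hρ1 hρ0 ha l
    calc a l * ((e / gg a ρ p) ^ ρ * ((bb a ρ l) ^ ρ * p l ^ (-(ss ρ))))
        = (e / gg a ρ p) ^ ρ * ((a l * (bb a ρ l) ^ ρ) * p l ^ (-(ss ρ))) := by ring
      _ = (e / gg a ρ p) ^ ρ * (bb a ρ l * p l ^ (-(ss ρ))) := by rw [this]
  rw [Finset.sum_congr rfl (fun l _ => key l), ← Finset.mul_sum, ← gg,
    Real.div_rpow he hg.le]
  rw [div_mul_eq_mul_div, mul_div_assoc]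
  congr 1
  rw [Real.rpow_sub hg, Real.rpow_one]

lemma cesUtil_dem {a : Fin n → ℝ} {ρ : ℝ} {e : ℝ} {p : Fin n → ℝ}
    (hρ1 : ρ < 1) (hρ0 : ρ ≠ 0) (ha : ∀ j, 0 ≤ a j) (hp : ∀ j, 0 < p j)
    (he : 0 ≤ e) (hg : 0 < gg a ρ p) :
    cesUtil a ρ (dem a ρ e p) = e * gg a ρ p ^ ((1-ρ)/ρ) := by
  rw [cesUtil, sum_a_dem hρ1 hρ0 ha hp he hg,
    Real.mul_rpow (Real.rpow_nonneg he _) (Real.rpow_nonneg hg.le _),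
    ← Real.rpow_mul he, ← Real.rpow_mul hg.le, mul_one_div_cancel hρ0, Real.rpow_one,
    mul_one_div]

lemma cesUtil_le_of_budget {a : Fin n → ℝ} {ρ : ℝ} {e : ℝ} {p : Fin n → ℝ} {z : Fin n → ℝ}
    (hρ : 0 < ρ) (hρ1 : ρ < 1) (ha : ∀ j, 0 ≤ a j) (hp : ∀ j, 0 < p j)
    (he : 0 ≤ e) (hg : 0 < gg a ρ p) (hz : z ∈ budgetSet p e) :
    cesUtil a ρ z ≤ e * gg a ρ p ^ ((1-ρ)/ρ) := by
  have h1ρ : (0:ℝ) < 1 - ρ := by linarith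
  obtain ⟨hz0, hzb⟩ := hz
  -- pointwise identity a l * z l ^ ρ = (p l * z l) ^ ρ * (bb l * p l ^ (-ss ρ)) ^ (1-ρ)
  have key : ∀ l : Fin n, a l * z l ^ ρ
      = (p l * z l) ^ ρ * (bb a ρ l * p l ^ (-(ss ρ))) ^ (1-ρ) := by
    intro l
    rw [Real.mul_rpow (hp l).le (hz0 l),
      Real.mul_rpow (bb_nonneg ha l) (Real.rpow_nonneg (hp l).le _)]
    have hb : (bb a ρ l) ^ (1-ρ) = a l := by
      rw [bb, ← Real.rpow_mul (ha l), one_div_mul_cancel h1ρ.ne', Real.rpow_one]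
    have hps : (p l ^ (-(ss ρ))) ^ (1-ρ) = p l ^ (-ρ) := by
      rw [← Real.rpow_mul (hp l).le]
      congr 1
      rw [ss]; field_simp
    rw [hb, hps]
    have : p l ^ ρ * p l ^ (-ρ) = 1 := by
      rw [← Real.rpow_add (hp l)]; simp
    calc a l * z l ^ ρ = (p l ^ ρ * p l ^ (-ρ)) * (a l * z l ^ ρ) := by rw [this]; ring
      _ = p l ^ ρ * z l ^ ρ * (a l * p l ^ (-ρ)) := by ring
  have hsum : ∑ l, a l * z l ^ ρ ≤ e ^ ρ * gg a ρ p ^ (1-ρ) := by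
    calc ∑ l, a l * z l ^ ρ
        = ∑ l, (p l * z l) ^ ρ * (bb a ρ l * p l ^ (-(ss ρ))) ^ (1-ρ) :=
          Finset.sum_congr rfl (fun l _ => key l)
      _ ≤ (∑ l, p l * z l) ^ ρ * (∑ l, bb a ρ l * p l ^ (-(ss ρ))) ^ (1-ρ) :=
          hoelder_sum _ _ hρ hρ1 (fun l => mul_nonneg (hp l).le (hz0 l))
            (fun l => mul_nonneg (bb_nonneg ha l) (Real.rpow_nonneg (hp l).le _))
      _ ≤ e ^ ρ * gg a ρ p ^ (1-ρ) := by
          rw [← gg]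
          gcongr
          exact Finset.sum_nonneg (fun l _ => mul_nonneg (hp l).le (hz0 l))
  have hS0 : (0:ℝ) ≤ ∑ l, a l * z l ^ ρ :=
    Finset.sum_nonneg fun l _ => mul_nonneg (ha l) (Real.rpow_nonneg (hz0 l) _)
  calc cesUtil a ρ z = (∑ l, a l * z l ^ ρ) ^ (1/ρ) := rfl
    _ ≤ (e ^ ρ * gg a ρ p ^ (1-ρ)) ^ (1/ρ) :=
        Real.rpow_le_rpow hS0 hsum (by positivity)
    _ = e * gg a ρ p ^ ((1-ρ)/ρ) := by
        rw [Real.mul_rpow (Real.rpow_nonneg he _) (Real.rpow_nonneg hg.le _),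
          ← Real.rpow_mul he, ← Real.rpow_mul hg.le, mul_one_div_cancel hρ.ne', Real.rpow_one,
          mul_one_div]

lemma cesUtil_single {a : Fin n → ℝ} {ρ : ℝ} {z : Fin n → ℝ} {j0 : Fin n}
    (hρ0 : ρ ≠ 0) (ha : ∀ j, 0 ≤ a j) (hsupp : ∀ l, l ≠ j0 → a l = 0)
    (hz0 : ∀ l, 0 ≤ z l) :
    cesUtil a ρ z = (a j0) ^ (1/ρ) * z j0 := by
  have h1ρ : (1:ℝ)/ρ ≠ 0 := by simp [hρ0]
  have hsum : ∑ l, a l * z l ^ ρ = a j0 * z j0 ^ ρ := by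
    rw [Finset.sum_eq_single j0]
    · intro l _ hl; rw [hsupp l hl, zero_mul]
    · intro h; exact absurd (Finset.mem_univ j0) h
  rw [cesUtil, hsum]
  rcases eq_or_lt_of_le (hz0 j0) with hz | hz
  · rw [← hz, Real.zero_rpow hρ0, mul_zero, Real.zero_rpow h1ρ, mul_zero]
  · rcases eq_or_lt_of_le (ha j0) with haj | haj
    · rw [← haj, zero_mul, Real.zero_rpow h1ρ, zero_mul]
    · rw [Real.mul_rpow haj.le (Real.rpow_nonneg hz.le _), ← Real.rpow_mul hz.le,
        mul_one_div_cancel hρ0, Real.rpow_one]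

lemma budget_coord_le {p : Fin n → ℝ} {e : ℝ} {z : Fin n → ℝ} (hp : ∀ j, 0 < p j)
    (hz : z ∈ budgetSet p e) (l : Fin n) : z l ≤ e / p l := by
  obtain ⟨hz0, hzb⟩ := hz
  rw [le_div_iff₀ (hp l), mul_comm]
  calc p l * z l ≤ ∑ j, p j * z j :=
        Finset.single_le_sum (fun j _ => mul_nonneg (hp j).le (hz0 j)) (Finset.mem_univ l)
    _ ≤ e := hzb

lemma dem_single {a : Fin n → ℝ} {ρ : ℝ} {e : ℝ} {p : Fin n → ℝ} {j0 : Fin n}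
    (hρ1 : ρ < 1) (ha : ∀ j, 0 ≤ a j) (haj : a j0 ≠ 0) (hsupp : ∀ l, l ≠ j0 → a l = 0)
    (hp : ∀ j, 0 < p j) :
    dem a ρ e p j0 = e / p j0 := by
  have h1ρ : (0:ℝ) < 1 - ρ := by linarith
  have hb0 : ∀ l, l ≠ j0 → bb a ρ l = 0 := by
    intro l hl
    rw [bb, hsupp l hl, Real.zero_rpow (by simp [h1ρ.ne'] : (1:ℝ)/(1-ρ) ≠ 0)]
  have hbj : 0 < bb a ρ j0 :=
    Real.rpow_pos_of_pos (lt_of_le_of_ne (ha j0) (Ne.symm haj)) _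
  have hgg : gg a ρ p = bb a ρ j0 * p j0 ^ (-(ss ρ)) := by
    rw [gg, Finset.sum_eq_single j0]
    · intro l _ hl; rw [hb0 l hl, zero_mul]
    · intro h; exact absurd (Finset.mem_univ j0) h
  have hps : p j0 ^ (-(ss ρ) - 1) = p j0 ^ (-(ss ρ)) * (p j0)⁻¹ := by
    rw [← Real.rpow_neg_one (p j0), ← Real.rpow_add (hp j0)]
    congr 1
  rw [dem, hgg, hps]
  have h1 : bb a ρ j0 ≠ 0 := hbj.ne'
  have h2 : p j0 ^ (-(ss ρ)) ≠ 0 := (Real.rpow_pos_of_pos (hp j0) _).ne'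
  have h3 : p j0 ≠ 0 := (hp j0).ne'
  field_simp

lemma isDemand_dem {a : Fin n → ℝ} {ρ : ℝ} {e : ℝ} {p : Fin n → ℝ}
    (hρ1 : ρ < 1) (hρ0 : ρ ≠ 0) (ha : ∀ j, 0 ≤ a j) (ha0 : ∃ j, a j ≠ 0)
    (hp : ∀ j, 0 < p j) (he : 0 < e)
    (hsing : ρ < 0 → ∀ j k, a j ≠ 0 → a k ≠ 0 → j = k) :
    IsDemand a ρ p e (dem a ρ e p) := by
  have hg : 0 < gg a ρ p := gg_pos ha ha0 hp
  have hmem : dem a ρ e p ∈ budgetSet p e :=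
    ⟨dem_nonneg ha he.le hp hg, le_of_eq (dem_budget hp hg)⟩
  refine ⟨hmem, fun z hz => ?_⟩
  rcases lt_or_gt_of_ne hρ0 with hneg | hpos
  · -- ρ < 0 : single good
    obtain ⟨j0, haj⟩ := ha0
    have hsupp : ∀ l, l ≠ j0 → a l = 0 := by
      intro l hl
      by_contra hla
      exact hl (hsing hneg l j0 hla haj)
    rw [cesUtil_single hρ0 ha hsupp hz.1, cesUtil_single hρ0 ha hsupp hmem.1,
      dem_single hρ1 ha haj hsupp hp]
    have : z j0 ≤ e / p j0 := budget_coord_le hp hz j0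
    have hc : (0:ℝ) ≤ a j0 ^ (1/ρ) := Real.rpow_nonneg (ha j0) _
    exact mul_le_mul_of_nonneg_left this hc
  · -- 0 < ρ < 1
    rw [cesUtil_dem hρ1 hρ0 ha hp he.le hg]
    exact cesUtil_le_of_budget hpos hρ1 ha hp he.le hg hz

lemma single_of_rho_neg {m : ℕ} (M : CESMarket n m) (i : Fin m) (hneg : M.ρ i < 0) :
    ∀ j k, M.a i j ≠ 0 → M.a i k ≠ 0 → j = k := by
  intro j k hj hk
  by_contra hjk
  set a := M.a i with ha_def
  set ρ := M.ρ i with hρ_def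
  set e := M.e i with he_def
  have ha : ∀ l, 0 ≤ a l := M.a_nonneg i
  have hρ0 : ρ ≠ 0 := M.ρ_ne_zero i
  have he : 0 < e := M.e_pos i
  set p : Fin n → ℝ := fun l => if a l = 0 then 1 else (a l) ^ (1/ρ) with hp_def
  have hp : ∀ l, 0 < p l := by
    intro l
    rw [hp_def]
    dsimp only
    split
    · exact one_pos
    · exact Real.rpow_pos_of_pos (lt_of_le_of_ne (ha l) (by tauto)) _
  have hpl : ∀ l, a l ≠ 0 → p l ^ ρ = a l := by
    intro l hl
    have hal : 0 < a l := lt_of_le_of_ne (ha l) (Ne.symm hl)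
    rw [hp_def]
    dsimp only
    rw [if_neg hl, ← Real.rpow_mul hal.le, one_div_mul_cancel hρ0, Real.rpow_one]
  -- each candidate bundle
  have hdem : ∀ l : Fin n, a l ≠ 0 → IsDemand a ρ p e (Pi.single l (e / p l)) := by
    intro l hl
    have hel : 0 < e / p l := div_pos he (hp l)
    have hnn : ∀ t, 0 ≤ (Pi.single l (e / p l) : Fin n → ℝ) t := by
      intro t
      rcases eq_or_ne t l with rfl | ht
      · simp [hel.le]
      · simp [Pi.single_eq_of_ne ht]
    have hbud : ∑ t, p t * (Pi.single l (e / p l) : Fin n → ℝ) t = e := by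
      rw [Finset.sum_eq_single l]
      · rw [Pi.single_eq_same, mul_div_cancel₀ _ (hp l).ne']
      · intro t _ ht; rw [Pi.single_eq_of_ne ht, mul_zero]
      · intro h; exact absurd (Finset.mem_univ l) h
    have hutil : cesUtil a ρ ((Pi.single l (e / p l) : Fin n → ℝ)) = e := by
      rw [cesUtil, Finset.sum_eq_single l]
      · rw [Pi.single_eq_same, Real.div_rpow he.le (hp l).le, hpl l hl,
          mul_comm (a l), div_mul_cancel₀ _ hl, ← Real.rpow_mul he.le,
          mul_one_div_cancel hρ0, Real.rpow_one]
      · intro t _ ht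
        rw [Pi.single_eq_of_ne ht, Real.zero_rpow hρ0, mul_zero]
      · intro h; exact absurd (Finset.mem_univ l) h
    refine ⟨⟨hnn, le_of_eq hbud⟩, fun z hz => ?_⟩
    rw [hutil]
    by_cases hex : ∃ t, a t ≠ 0 ∧ 0 < z t
    · obtain ⟨t, hat, hzt⟩ := hex
      have hat' : 0 < a t := lt_of_le_of_ne (ha t) (Ne.symm hat)
      have h1 : (e / p t) ^ ρ ≤ z t ^ ρ :=
        Real.rpow_le_rpow_of_nonpos hzt (budget_coord_le hp hz t) hneg.le
      have h2 : e ^ ρ ≤ ∑ u, a u * z u ^ ρ := by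
        calc e ^ ρ = a t * (e / p t) ^ ρ := by
              rw [Real.div_rpow he.le (hp t).le, hpl t hat]
              field_simp
            _ ≤ a t * z t ^ ρ := mul_le_mul_of_nonneg_left h1 hat'.le
            _ ≤ ∑ u, a u * z u ^ ρ := Finset.single_le_sum
                (fun u _ => mul_nonneg (ha u) (Real.rpow_nonneg (hz.1 u) _))
                (Finset.mem_univ t)
      calc cesUtil a ρ z = (∑ u, a u * z u ^ ρ) ^ (1/ρ) := rfl
        _ ≤ (e ^ ρ) ^ (1/ρ) := Real.rpow_le_rpow_of_nonpos
            (Real.rpow_pos_of_pos he _) h2 (by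
              rw [one_div]
              exact inv_nonpos.mpr hneg.le)
        _ = e := by
            rw [← Real.rpow_mul he.le, mul_one_div_cancel hρ0, Real.rpow_one]
    · push_neg at hex
      have : ∀ u : Fin n, a u * z u ^ ρ = 0 := by
        intro u
        by_cases hau : a u = 0
        · rw [hau, zero_mul]
        · have : z u = 0 := le_antisymm (hex u hau) (hz.1 u)
          rw [this, Real.zero_rpow hρ0, mul_zero]
      rw [cesUtil, Finset.sum_congr rfl (fun u _ => this u), Finset.sum_const_zero,
        Real.zero_rpow (by simp [hρ0] : (1:ℝ)/ρ ≠ 0)]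
      exact he.le
  have h1 := M.x_unique p hp i _ (hdem j hj)
  have h2 := M.x_unique p hp i _ (hdem k hk)
  have h3 : (Pi.single j (e / p j) : Fin n → ℝ) = Pi.single k (e / p k) := by rw [h1, h2]
  have h4 := congrFun h3 j
  rw [Pi.single_eq_same, Pi.single_eq_of_ne hjk] at h4
  exact absurd h4 (div_pos he (hp j)).ne'

lemma market_x_eq_dem {m : ℕ} (M : CESMarket n m) {p : Fin n → ℝ}
    (hp : ∀ j, 0 < p j) (i : Fin m) :
    M.x p i = dem (M.a i) (M.ρ i) (M.e i) p :=
  (M.x_unique p hp i _ (isDemand_dem (M.ρ_lt_one i) (M.ρ_ne_zero i) (M.a_nonneg i)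
    (M.a_ne_zero i) hp (M.e_pos i) (fun hneg => single_of_rho_neg M i hneg))).symm

lemma uhat_eq {a : Fin n → ℝ} {ρ : ℝ} {p : Fin n → ℝ}
    (hρ1 : ρ < 1) (hρ0 : ρ ≠ 0) (ha : ∀ j, 0 ≤ a j) (ha0 : ∃ j, a j ≠ 0)
    (hp : ∀ j, 0 < p j)
    (hsing : ρ < 0 → ∀ j k, a j ≠ 0 → a k ≠ 0 → j = k) :
    uhat a ρ p = gg a ρ p ^ ((1-ρ)/ρ) := by
  have hg : 0 < gg a ρ p := gg_pos ha ha0 hp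
  have hd := isDemand_dem hρ1 hρ0 ha ha0 hp one_pos hsing
  have hval : cesUtil a ρ (dem a ρ 1 p) = gg a ρ p ^ ((1-ρ)/ρ) := by
    rw [cesUtil_dem hρ1 hρ0 ha hp zero_le_one hg, one_mul]
  apply IsGreatest.csSup_eq
  constructor
  · exact ⟨dem a ρ 1 p, hd.1, hval⟩
  · rintro u ⟨z, hz, rfl⟩
    rw [← hval]
    exact hd.2 z hz

/-- closed form of the potential -/
noncomputable def Phi {m : ℕ} (M : CESMarket n m) : (Fin n → ℝ) → ℝ :=
  fun q => (∑ k, q k) +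
    ∑ i, M.e i * (((1 - M.ρ i)/(M.ρ i)) * Real.log (gg (M.a i) (M.ρ i) q))

lemma phi_eq_Phi {m : ℕ} (M : CESMarket n m) {q : Fin n → ℝ} (hq : ∀ j, 0 < q j) :
    phi M q = Phi M q := by
  rw [phi, Phi]
  congr 1
  refine Finset.sum_congr rfl (fun i _ => ?_)
  rw [uhat_eq (M.ρ_lt_one i) (M.ρ_ne_zero i) (M.a_nonneg i) (M.a_ne_zero i) hq
      (fun hneg => single_of_rho_neg M i hneg),
    Real.log_rpow (gg_pos (M.a_nonneg i) (M.a_ne_zero i) hq)]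

lemma isOpen_pos_orthant : IsOpen {q : Fin n → ℝ | ∀ j, 0 < q j} := by
  have : {q : Fin n → ℝ | ∀ j, 0 < q j} = ⋂ j, {q : Fin n → ℝ | 0 < q j} := by
    ext q; simp [Set.mem_iInter]
  rw [this]
  exact isOpen_iInter_of_finite fun j => isOpen_lt continuous_const (continuous_apply j)

/-- derivative of `gg` -/
noncomputable def ggD (a : Fin n → ℝ) (ρ : ℝ) (q : Fin n → ℝ) : (Fin n → ℝ) →L[ℝ] ℝ :=
  ∑ k, (bb a ρ k * (-(ss ρ)) * q k ^ (-(ss ρ) - 1)) •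
    (ContinuousLinearMap.proj k : (Fin n → ℝ) →L[ℝ] ℝ)

lemma hasFDerivAt_gg (a : Fin n → ℝ) (ρ : ℝ) {q : Fin n → ℝ} (hq : ∀ j, 0 < q j) :
    HasFDerivAt (gg a ρ) (ggD a ρ q) q := by
  have h : ∀ k : Fin n, HasFDerivAt (fun q : Fin n → ℝ => bb a ρ k * q k ^ (-(ss ρ)))
      ((bb a ρ k * (-(ss ρ)) * q k ^ (-(ss ρ) - 1)) •
        (ContinuousLinearMap.proj k : (Fin n → ℝ) →L[ℝ] ℝ)) q := by
    intro k
    have h1 : HasDerivAt (fun t : ℝ => t ^ (-(ss ρ))) (-(ss ρ) * q k ^ (-(ss ρ) - 1)) (q k) :=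
      Real.hasDerivAt_rpow_const (Or.inl (hq k).ne')
    have h2 : HasFDerivAt (fun q : Fin n → ℝ => q k)
        (ContinuousLinearMap.proj k : (Fin n → ℝ) →L[ℝ] ℝ) q :=
      (ContinuousLinearMap.proj k : (Fin n → ℝ) →L[ℝ] ℝ).hasFDerivAt
    have h3 := (h1.comp_hasFDerivAt q h2).const_mul (bb a ρ k)
    refine h3.congr_fderiv ?_
    rw [smul_smul]
    ring_nf
  have := HasFDerivAt.fun_sum (fun k (_ : k ∈ Finset.univ) => h k)
  exact this

lemma ggD_apply_single (a : Fin n → ℝ) (ρ : ℝ) (q : Fin n → ℝ) (j : Fin n) :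
    ggD a ρ q (Pi.single j 1) = bb a ρ j * (-(ss ρ)) * q j ^ (-(ss ρ) - 1) := by
  rw [ggD]
  rw [ContinuousLinearMap.sum_apply]
  rw [Finset.sum_eq_single j]
  · simp
  · intro l _ hl
    rw [ContinuousLinearMap.smul_apply, ContinuousLinearMap.proj_apply,
      Pi.single_eq_of_ne hl, smul_eq_mul, mul_zero]
  · intro h; exact absurd (Finset.mem_univ j) h

noncomputable def PhiD {m : ℕ} (M : CESMarket n m) (q : Fin n → ℝ) : (Fin n → ℝ) →L[ℝ] ℝ :=
  (∑ k, (ContinuousLinearMap.proj k : (Fin n → ℝ) →L[ℝ] ℝ)) +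
    ∑ i, M.e i • (((1 - M.ρ i)/(M.ρ i)) •
      ((gg (M.a i) (M.ρ i) q)⁻¹ • ggD (M.a i) (M.ρ i) q))

lemma hasFDerivAt_Phi {m : ℕ} (M : CESMarket n m) {q : Fin n → ℝ} (hq : ∀ j, 0 < q j) :
    HasFDerivAt (Phi M) (PhiD M q) q := by
  have hlin : HasFDerivAt (fun q : Fin n → ℝ => ∑ k, q k)
      (∑ k, (ContinuousLinearMap.proj k : (Fin n → ℝ) →L[ℝ] ℝ)) q :=
    HasFDerivAt.fun_sum (fun k _ =>
      (ContinuousLinearMap.proj k : (Fin n → ℝ) →L[ℝ] ℝ).hasFDerivAt)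
  have hbuy : ∀ i : Fin m, HasFDerivAt
      (fun q => M.e i * (((1 - M.ρ i)/(M.ρ i)) * Real.log (gg (M.a i) (M.ρ i) q)))
      (M.e i • (((1 - M.ρ i)/(M.ρ i)) •
        ((gg (M.a i) (M.ρ i) q)⁻¹ • ggD (M.a i) (M.ρ i) q))) q := by
    intro i
    have hg : 0 < gg (M.a i) (M.ρ i) q := gg_pos (M.a_nonneg i) (M.a_ne_zero i) hq
    have h1 := (Real.hasDerivAt_log hg.ne').comp_hasFDerivAt q
      (hasFDerivAt_gg (M.a i) (M.ρ i) hq)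
    exact (h1.const_mul ((1 - M.ρ i)/(M.ρ i))).const_mul (M.e i)
  exact hlin.add (HasFDerivAt.fun_sum (fun i _ => hbuy i))

lemma one_sub_rho_div_rho_mul_ss {ρ : ℝ} (hρ1 : ρ < 1) (hρ0 : ρ ≠ 0) :
    ((1 - ρ)/ρ) * ss ρ = 1 := by
  have h1ρ : (1:ℝ) - ρ ≠ 0 := by intro h; linarith [h]
  rw [ss]; field_simp

lemma partialDeriv_Phi {m : ℕ} (M : CESMarket n m) {q : Fin n → ℝ} (hq : ∀ j, 0 < q j)
    (k : Fin n) :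
    partialDeriv' (Phi M) k q = 1 - ∑ i, dem (M.a i) (M.ρ i) (M.e i) q k := by
  rw [partialDeriv', (hasFDerivAt_Phi M hq).fderiv, PhiD]
  rw [ContinuousLinearMap.add_apply, ContinuousLinearMap.sum_apply,
    ContinuousLinearMap.sum_apply]
  have h1 : ∑ l, (ContinuousLinearMap.proj l : (Fin n → ℝ) →L[ℝ] ℝ) (Pi.single k 1) = 1 := by
    rw [Finset.sum_eq_single k]
    · simp
    · intro l _ hl
      rw [ContinuousLinearMap.proj_apply, Pi.single_eq_of_ne hl]
    · intro h; exact absurd (Finset.mem_univ k) h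
  rw [h1]
  have h2 : ∀ i : Fin m,
      (M.e i • (((1 - M.ρ i)/(M.ρ i)) •
        ((gg (M.a i) (M.ρ i) q)⁻¹ • ggD (M.a i) (M.ρ i) q))) (Pi.single k 1)
      = -(dem (M.a i) (M.ρ i) (M.e i) q k) := by
    intro i
    have hg : 0 < gg (M.a i) (M.ρ i) q := gg_pos (M.a_nonneg i) (M.a_ne_zero i) hq
    rw [ContinuousLinearMap.smul_apply, ContinuousLinearMap.smul_apply,
      ContinuousLinearMap.smul_apply, ggD_apply_single, dem]
    have hcs := one_sub_rho_div_rho_mul_ss (M.ρ_lt_one i) (M.ρ_ne_zero i)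
    rw [smul_eq_mul, smul_eq_mul, smul_eq_mul]
    set c := (1 - M.ρ i)/(M.ρ i) with hc_def
    set s := ss (M.ρ i) with hs_def
    set Q := q k ^ (-(ss (M.ρ i)) - 1) with hQ_def
    set G := gg (M.a i) (M.ρ i) q with hG_def
    set B := bb (M.a i) (M.ρ i) k with hB_def
    have key : M.e i * (c * (G⁻¹ * (B * -s * Q))) = -(c * s) * (M.e i * (B * Q) / G) := by
      simp only [div_eq_mul_inv]
      ring
    rw [key, hcs]
    ring
  rw [Finset.sum_congr rfl (fun i _ => h2 i), Finset.sum_neg_distrib]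
  ring

lemma secondPartial_Phi {m : ℕ} (M : CESMarket n m) {q : Fin n → ℝ} (hq : ∀ j, 0 < q j)
    {j k : Fin n} (hjk : j ≠ k) :
    secondPartial (Phi M) j k q
      = -∑ i, ss (M.ρ i) * dem (M.a i) (M.ρ i) (M.e i) q j
          * dem (M.a i) (M.ρ i) (M.e i) q k / M.e i := by
  classical
  -- convenient closed form of the partial derivative in direction k
  set ψ : (Fin n → ℝ) → ℝ := fun w => 1 - ∑ i,
    (M.e i * bb (M.a i) (M.ρ i) k) *
      (w k ^ (-(ss (M.ρ i)) - 1) * (gg (M.a i) (M.ρ i) w)⁻¹) with hψ_def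
  have hψ_eq : ∀ w : Fin n → ℝ, (∀ l, 0 < w l) → partialDeriv' (Phi M) k w = ψ w := by
    intro w hw
    rw [partialDeriv_Phi M hw k, hψ_def]
    dsimp only
    congr 1
    refine Finset.sum_congr rfl (fun i _ => ?_)
    rw [dem, div_eq_mul_inv]
    ring
  have hev : partialDeriv' (Phi M) k =ᶠ[nhds q] ψ :=
    Filter.eventuallyEq_of_mem (isOpen_pos_orthant.mem_nhds hq) (fun y hy => hψ_eq y hy)
  rw [secondPartial, partialDeriv', hev.fderiv_eq]
  -- now differentiate ψ at q
  have hterm : ∀ i : Fin m, HasFDerivAt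
      (fun w : Fin n → ℝ => (M.e i * bb (M.a i) (M.ρ i) k) *
        (w k ^ (-(ss (M.ρ i)) - 1) * (gg (M.a i) (M.ρ i) w)⁻¹))
      ((M.e i * bb (M.a i) (M.ρ i) k) •
        ((q k ^ (-(ss (M.ρ i)) - 1)) •
            (-(gg (M.a i) (M.ρ i) q ^ 2)⁻¹ • ggD (M.a i) (M.ρ i) q)
          + (gg (M.a i) (M.ρ i) q)⁻¹ •
            (((-(ss (M.ρ i)) - 1) * q k ^ (-(ss (M.ρ i)) - 1 - 1)) •
              (ContinuousLinearMap.proj k : (Fin n → ℝ) →L[ℝ] ℝ)))) q := by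
    intro i
    have hg : 0 < gg (M.a i) (M.ρ i) q := gg_pos (M.a_nonneg i) (M.a_ne_zero i) hq
    have h1 : HasDerivAt (fun t : ℝ => t ^ (-(ss (M.ρ i)) - 1))
        ((-(ss (M.ρ i)) - 1) * q k ^ (-(ss (M.ρ i)) - 1 - 1)) (q k) :=
      Real.hasDerivAt_rpow_const (Or.inl (hq k).ne')
    have hA : HasFDerivAt (fun w : Fin n → ℝ => w k ^ (-(ss (M.ρ i)) - 1))
        (((-(ss (M.ρ i)) - 1) * q k ^ (-(ss (M.ρ i)) - 1 - 1)) •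
          (ContinuousLinearMap.proj k : (Fin n → ℝ) →L[ℝ] ℝ)) q :=
      by have := h1.comp_hasFDerivAt q
            (ContinuousLinearMap.proj k : (Fin n → ℝ) →L[ℝ] ℝ).hasFDerivAt
         exact this
    have hInv : HasFDerivAt (fun w : Fin n → ℝ => (gg (M.a i) (M.ρ i) w)⁻¹)
        (-(gg (M.a i) (M.ρ i) q ^ 2)⁻¹ • ggD (M.a i) (M.ρ i) q) q :=
      (hasDerivAt_inv hg.ne').comp_hasFDerivAt q (hasFDerivAt_gg (M.a i) (M.ρ i) hq)
    exact (hA.mul hInv).const_mul _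
  have H : HasFDerivAt ψ (-(∑ i, (M.e i * bb (M.a i) (M.ρ i) k) •
      ((q k ^ (-(ss (M.ρ i)) - 1)) •
          (-(gg (M.a i) (M.ρ i) q ^ 2)⁻¹ • ggD (M.a i) (M.ρ i) q)
        + (gg (M.a i) (M.ρ i) q)⁻¹ •
          (((-(ss (M.ρ i)) - 1) * q k ^ (-(ss (M.ρ i)) - 1 - 1)) •
            (ContinuousLinearMap.proj k : (Fin n → ℝ) →L[ℝ] ℝ))))) q := by
    have := (HasFDerivAt.fun_sum (fun i (_ : i ∈ Finset.univ) => hterm i)).const_sub 1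
    exact this
  rw [H.fderiv]
  rw [ContinuousLinearMap.neg_apply, ContinuousLinearMap.sum_apply, neg_inj]
  refine Finset.sum_congr rfl (fun i _ => ?_)
  have hg : 0 < gg (M.a i) (M.ρ i) q := gg_pos (M.a_nonneg i) (M.a_ne_zero i) hq
  have he : 0 < M.e i := M.e_pos i
  rw [ContinuousLinearMap.smul_apply, ContinuousLinearMap.add_apply,
    ContinuousLinearMap.smul_apply, ContinuousLinearMap.smul_apply,
    ContinuousLinearMap.smul_apply, ContinuousLinearMap.smul_apply,
    ContinuousLinearMap.proj_apply, Pi.single_eq_of_ne (Ne.symm hjk),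
    ggD_apply_single, dem, dem]
  rw [smul_eq_mul, smul_eq_mul, smul_eq_mul, smul_eq_mul, smul_eq_mul]
  set s := ss (M.ρ i)
  set Qj := q j ^ (-(ss (M.ρ i)) - 1)
  set Qk := q k ^ (-(ss (M.ρ i)) - 1)
  set G := gg (M.a i) (M.ρ i) q
  set Bj := bb (M.a i) (M.ρ i) j
  set Bk := bb (M.a i) (M.ρ i) k
  have hG2 : G^2 ≠ 0 := pow_ne_zero 2 hg.ne'
  field_simp
  ring

lemma secondPartial_phi {m : ℕ} (M : CESMarket n m) {q : Fin n → ℝ} (hq : ∀ j, 0 < q j)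
    {j k : Fin n} (hjk : j ≠ k) :
    secondPartial (phi M) j k q
      = -∑ i, ss (M.ρ i) * dem (M.a i) (M.ρ i) (M.e i) q j
          * dem (M.a i) (M.ρ i) (M.e i) q k / M.e i := by
  have hU := isOpen_pos_orthant (n := n)
  have h1 : ∀ w : Fin n → ℝ, (∀ l, 0 < w l) →
      fderiv ℝ (phi M) w = fderiv ℝ (Phi M) w := fun w hw =>
    Filter.EventuallyEq.fderiv_eq
      (Filter.eventuallyEq_of_mem (hU.mem_nhds hw) (fun y hy => phi_eq_Phi M hy))
  have h2 : partialDeriv' (phi M) k =ᶠ[nhds q] partialDeriv' (Phi M) k :=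
    Filter.eventuallyEq_of_mem (hU.mem_nhds hq)
      (fun y hy => by rw [partialDeriv', partialDeriv', h1 y hy])
  rw [secondPartial, partialDeriv', h2.fderiv_eq, ← partialDeriv', ← secondPartial,
    secondPartial_Phi M hq hjk]

lemma ss_add_one_pos {ρ : ℝ} (hρ1 : ρ < 1) : 0 < ss ρ + 1 := by
  have h : (0:ℝ) < 1 - ρ := by linarith
  rw [ss_add_one hρ1]
  exact one_div_pos.mpr h

lemma dem_ratio {a : Fin n → ℝ} {ρ e r E : ℝ} {p p' : Fin n → ℝ}
    (hρ1 : ρ < 1) (ha : ∀ j, 0 ≤ a j) (ha0 : ∃ j, a j ≠ 0)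
    (hp : ∀ j, 0 < p j) (hp' : ∀ j, 0 < p' j) (he : 0 ≤ e) (hr : 1 ≤ r)
    (hlo : ∀ k, p k / r ≤ p' k) (hhi : ∀ k, p' k ≤ r * p k)
    (hE1 : 1 ≤ E) (hsE : ss ρ + 1 ≤ E) (j : Fin n) :
    dem a ρ e p' j ≤ r ^ (2*E - 1) * dem a ρ e p j := by
  have hr0 : (0:ℝ) < r := lt_of_lt_of_le one_pos hr
  have hG : 0 < gg a ρ p := gg_pos ha ha0 hp
  have hG' : 0 < gg a ρ p' := gg_pos ha ha0 hp'
  have hs1 : 0 < ss ρ + 1 := ss_add_one_pos hρ1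
  -- step A
  have hA : p' j ^ (-(ss ρ) - 1) ≤ r ^ (ss ρ + 1) * p j ^ (-(ss ρ) - 1) := by
    have h1 : p' j ^ (-(ss ρ) - 1) ≤ (p j / r) ^ (-(ss ρ) - 1) :=
      Real.rpow_le_rpow_of_nonpos (div_pos (hp j) hr0) (hlo j) (by linarith)
    have h2 : (p j / r) ^ (-(ss ρ) - 1) = r ^ (ss ρ + 1) * p j ^ (-(ss ρ) - 1) := by
      rw [Real.div_rpow (hp j).le hr0.le, div_eq_mul_inv, ← Real.rpow_neg hr0.le]
      rw [mul_comm]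
      congr 2
      ring
    rw [h2] at h1
    exact h1
  -- step B
  have hB : gg a ρ p ≤ r ^ |ss ρ| * gg a ρ p' := by
    rw [gg, gg, Finset.mul_sum]
    refine Finset.sum_le_sum (fun k _ => ?_)
    have hbk := bb_nonneg (ρ := ρ) ha k
    rcases le_or_gt 0 (ss ρ) with hs | hs
    · rw [abs_of_nonneg hs]
      have h1 : p' k / r ≤ p k := by
        rw [div_le_iff₀ hr0, mul_comm]
        exact hhi k
      have h2 : p k ^ (-(ss ρ)) ≤ (p' k / r) ^ (-(ss ρ)) :=
        Real.rpow_le_rpow_of_nonpos (div_pos (hp' k) hr0) h1 (by linarith)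
      have h3 : (p' k / r) ^ (-(ss ρ)) = r ^ (ss ρ) * p' k ^ (-(ss ρ)) := by
        rw [Real.div_rpow (hp' k).le hr0.le, div_eq_mul_inv, ← Real.rpow_neg hr0.le, neg_neg,
          mul_comm]
      calc bb a ρ k * p k ^ (-(ss ρ)) ≤ bb a ρ k * ((p' k / r) ^ (-(ss ρ))) := by
            exact mul_le_mul_of_nonneg_left h2 hbk
        _ = r ^ (ss ρ) * (bb a ρ k * p' k ^ (-(ss ρ))) := by rw [h3]; ring
    · rw [abs_of_neg hs]
      have h1 : p k ≤ r * p' k := by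
        have := hlo k
        rw [div_le_iff₀ hr0] at this
        linarith [this]
      have h2 : p k ^ (-(ss ρ)) ≤ (r * p' k) ^ (-(ss ρ)) :=
        Real.rpow_le_rpow (hp k).le h1 (by linarith)
      have h3 : (r * p' k) ^ (-(ss ρ)) = r ^ (-(ss ρ)) * p' k ^ (-(ss ρ)) :=
        Real.mul_rpow hr0.le (hp' k).le
      calc bb a ρ k * p k ^ (-(ss ρ)) ≤ bb a ρ k * ((r * p' k) ^ (-(ss ρ))) :=
            mul_le_mul_of_nonneg_left h2 hbk
        _ = r ^ (-(ss ρ)) * (bb a ρ k * p' k ^ (-(ss ρ))) := by rw [h3]; ring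
  -- step C : combine
  have hinv : (gg a ρ p')⁻¹ ≤ r ^ |ss ρ| * (gg a ρ p)⁻¹ := by
    rw [← div_eq_mul_inv]
    rw [le_div_iff₀ hG]
    rw [inv_mul_le_iff₀ hG']
    calc gg a ρ p ≤ r ^ |ss ρ| * gg a ρ p' := hB
      _ = gg a ρ p' * r ^ |ss ρ| := mul_comm _ _
  have habs : 0 ≤ |ss ρ| := abs_nonneg _
  have hexp : ss ρ + 1 + |ss ρ| ≤ 2*E - 1 := by
    rcases le_or_gt 0 (ss ρ) with hs | hs
    · rw [abs_of_nonneg hs]; linarith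
    · rw [abs_of_neg hs]; linarith
  have hd : dem a ρ e p' j
      = (e * bb a ρ j) * (p' j ^ (-(ss ρ) - 1) * (gg a ρ p')⁻¹) := by
    rw [dem, div_eq_mul_inv]; ring
  have hd' : dem a ρ e p j
      = (e * bb a ρ j) * (p j ^ (-(ss ρ) - 1) * (gg a ρ p)⁻¹) := by
    rw [dem, div_eq_mul_inv]; ring
  rw [hd, hd']
  have heb : 0 ≤ e * bb a ρ j := mul_nonneg he (bb_nonneg ha j)
  have step : p' j ^ (-(ss ρ) - 1) * (gg a ρ p')⁻¹
      ≤ (r ^ (ss ρ + 1) * p j ^ (-(ss ρ) - 1)) * (r ^ |ss ρ| * (gg a ρ p)⁻¹) :=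
    mul_le_mul hA hinv (inv_nonneg.mpr hG'.le)
      (mul_nonneg (Real.rpow_nonneg hr0.le _) (Real.rpow_nonneg (hp j).le _))
  calc (e * bb a ρ j) * (p' j ^ (-(ss ρ) - 1) * (gg a ρ p')⁻¹)
      ≤ (e * bb a ρ j) * ((r ^ (ss ρ + 1) * p j ^ (-(ss ρ) - 1)) * (r ^ |ss ρ| * (gg a ρ p)⁻¹)) :=
        mul_le_mul_of_nonneg_left step heb
    _ = (r ^ (ss ρ + 1) * r ^ |ss ρ|) *
        ((e * bb a ρ j) * (p j ^ (-(ss ρ) - 1) * (gg a ρ p)⁻¹)) := by ring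
    _ ≤ r ^ (2*E - 1) * ((e * bb a ρ j) * (p j ^ (-(ss ρ) - 1) * (gg a ρ p)⁻¹)) := by
        have h4 : r ^ (ss ρ + 1) * r ^ |ss ρ| = r ^ (ss ρ + 1 + |ss ρ|) :=
          (Real.rpow_add hr0 _ _).symm
        rw [h4]
        have h5 : r ^ (ss ρ + 1 + |ss ρ|) ≤ r ^ (2*E - 1) :=
          Real.rpow_le_rpow_of_exponent_le hr hexp
        refine mul_le_mul_of_nonneg_right h5 ?_
        exact mul_nonneg heb (mul_nonneg (Real.rpow_nonneg (hp j).le _) (inv_nonneg.mpr hG.le))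

lemma ss_mono {ρ₁ ρ₂ : ℝ} (h1 : ρ₁ < 1) (h2 : ρ₂ < 1) (h : ρ₁ ≤ ρ₂) : ss ρ₁ ≤ ss ρ₂ := by
  have ha : (0:ℝ) < 1 - ρ₁ := by linarith
  have hb : (0:ℝ) < 1 - ρ₂ := by linarith
  have : 1/(1-ρ₁) ≤ 1/(1-ρ₂) := by
    apply one_div_le_one_div_of_le hb
    linarith
  have e1 := ss_add_one h1
  have e2 := ss_add_one h2
  linarith

lemma abs_ss_le {ρ ρb θ : ℝ} (hρ1 : ρ < 1) (hb1 : ρb < 1) (hle : ρ ≤ ρb)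
    (hθ : θ = max (ρb / (1 - ρb)) 1) : |ss ρ| ≤ θ := by
  have h1ρ : (0:ℝ) < 1 - ρ := by linarith
  rcases le_or_gt 0 (ss ρ) with hs | hs
  · rw [abs_of_nonneg hs]
    calc ss ρ ≤ ss ρb := ss_mono hρ1 hb1 hle
      _ ≤ θ := by rw [hθ, ss]; exact le_max_left _ _
  · rw [abs_of_neg hs]
    have : -(ss ρ) ≤ 1 := by
      rw [ss, neg_div']
      rw [div_le_one h1ρ]
      linarith
    calc -(ss ρ) ≤ 1 := this
      _ ≤ θ := by rw [hθ]; exact le_max_right _ _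

end Stmt8Aux

open Stmt8Aux

/-- in a CES Fisher market, with `ρ := max_i ρ_i`,
`θ := max{ρ/(1−ρ), 1}` and `E := max{1/(1−ρ), 1}`, for positive prices `p`, `r ≥ 1`,
and any positive prices `p'` with `p_k/r ≤ p'_k ≤ r·p_k` for all `k`, one has
`∑_{k ≠ j} |∂²φ/∂p_j∂p_k(p')|·p_k ≤ θ·r^{2E}·x_j(p)` for every good `j`. -/
theorem stmt_8 (n m : ℕ) (M : CESMarket n m)
    (ρbar θ E : ℝ) (hρbar : IsGreatest (Set.range M.ρ) ρbar)
    (hθ : θ = max (ρbar / (1 - ρbar)) 1) (hE : E = max (1 / (1 - ρbar)) 1)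
    (p p' : Fin n → ℝ) (hp : ∀ j, 0 < p j) (hp' : ∀ j, 0 < p' j)
    (r : ℝ) (hr : 1 ≤ r)
    (hlo : ∀ k, p k / r ≤ p' k) (hhi : ∀ k, p' k ≤ r * p k) (j : Fin n) :
    ∑ k ∈ Finset.univ.erase j, |secondPartial (phi M) j k p'| * p k ≤
      θ * r ^ (2 * E) * totalDemand M p j := by
  classical
  have hr0 : (0:ℝ) < r := lt_of_lt_of_le one_pos hr
  -- facts about ρbar, θ, E
  obtain ⟨⟨i0, hi0⟩, hub⟩ := hρbar
  have hb1 : ρbar < 1 := hi0 ▸ M.ρ_lt_one i0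
  have h1b : (0:ℝ) < 1 - ρbar := by linarith
  have hθ1 : (1:ℝ) ≤ θ := by rw [hθ]; exact le_max_right _ _
  have hE1 : (1:ℝ) ≤ E := by rw [hE]; exact le_max_right _ _
  have hle : ∀ i, M.ρ i ≤ ρbar := fun i => hub ⟨i, rfl⟩
  have hsE : ∀ i, ss (M.ρ i) + 1 ≤ E := by
    intro i
    rw [ss_add_one (M.ρ_lt_one i)]
    calc 1/(1 - M.ρ i) ≤ 1/(1 - ρbar) := by
          apply one_div_le_one_div_of_le h1b
          linarith [hle i]
      _ ≤ E := by rw [hE]; exact le_max_left _ _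
  have hsθ : ∀ i, |ss (M.ρ i)| ≤ θ := fun i => abs_ss_le (M.ρ_lt_one i) hb1 (hle i) hθ
  -- demand abbreviations
  set D' : Fin m → Fin n → ℝ := fun i => dem (M.a i) (M.ρ i) (M.e i) p' with hD'
  set D : Fin m → Fin n → ℝ := fun i => dem (M.a i) (M.ρ i) (M.e i) p with hD
  have hG' : ∀ i, 0 < gg (M.a i) (M.ρ i) p' :=
    fun i => gg_pos (M.a_nonneg i) (M.a_ne_zero i) hp'
  have hG : ∀ i, 0 < gg (M.a i) (M.ρ i) p :=
    fun i => gg_pos (M.a_nonneg i) (M.a_ne_zero i) hp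
  have hD'0 : ∀ i l, 0 ≤ D' i l :=
    fun i l => dem_nonneg (M.a_nonneg i) (M.e_pos i).le hp' (hG' i) l
  have hD0 : ∀ i l, 0 ≤ D i l :=
    fun i l => dem_nonneg (M.a_nonneg i) (M.e_pos i).le hp (hG i) l
  -- total demand is the closed form
  have htot : totalDemand M p j = ∑ i, D i j := by
    rw [totalDemand]
    exact Finset.sum_congr rfl (fun i _ => congrFun (market_x_eq_dem M hp i) j)
  -- budget spend bound at p'
  have hspend : ∀ i, ∑ k ∈ Finset.univ.erase j, D' i k * p k ≤ r * M.e i := by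
    intro i
    have h1 : ∀ k : Fin n, D' i k * p k ≤ r * (p' k * D' i k) := by
      intro k
      have hk : p k ≤ r * p' k := by
        have := hlo k
        rw [div_le_iff₀ hr0] at this
        linarith
      calc D' i k * p k ≤ D' i k * (r * p' k) := mul_le_mul_of_nonneg_left hk (hD'0 i k)
        _ = r * (p' k * D' i k) := by ring
    calc ∑ k ∈ Finset.univ.erase j, D' i k * p k
        ≤ ∑ k ∈ Finset.univ.erase j, r * (p' k * D' i k) :=
          Finset.sum_le_sum (fun k _ => h1 k)
      _ ≤ ∑ k, r * (p' k * D' i k) := by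
          apply Finset.sum_le_sum_of_subset_of_nonneg (Finset.erase_subset _ _)
          intro k _ _
          exact mul_nonneg hr0.le (mul_nonneg (hp' k).le (hD'0 i k))
      _ = r * M.e i := by
          rw [← Finset.mul_sum, dem_budget hp' (hG' i)]
  -- ratio bound
  have hratio : ∀ i, D' i j ≤ r ^ (2*E - 1) * D i j := by
    intro i
    exact dem_ratio (M.ρ_lt_one i) (M.a_nonneg i) (M.a_ne_zero i) hp hp'
      (M.e_pos i).le hr hlo hhi hE1 (hsE i) j
  -- the chain
  calc ∑ k ∈ Finset.univ.erase j, |secondPartial (phi M) j k p'| * p k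
      ≤ ∑ k ∈ Finset.univ.erase j, (∑ i, θ * (D' i j / M.e i) * (D' i k * p k)) := by
        refine Finset.sum_le_sum (fun k hk => ?_)
        have hjk : j ≠ k := (Finset.ne_of_mem_erase hk).symm
        rw [secondPartial_phi M hp' hjk, abs_neg]
        have step1 : |∑ i, ss (M.ρ i) * D' i j * D' i k / M.e i|
            ≤ ∑ i, θ * (D' i j * D' i k / M.e i) := by
          calc |∑ i, ss (M.ρ i) * D' i j * D' i k / M.e i|
              ≤ ∑ i, |ss (M.ρ i) * D' i j * D' i k / M.e i| :=
                Finset.abs_sum_le_sum_abs _ _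
            _ ≤ ∑ i, θ * (D' i j * D' i k / M.e i) := by
                refine Finset.sum_le_sum (fun i _ => ?_)
                rw [abs_div, abs_mul, abs_mul, abs_of_nonneg (hD'0 i j),
                  abs_of_nonneg (hD'0 i k), abs_of_nonneg (M.e_pos i).le]
                have h2 : |ss (M.ρ i)| * D' i j * D' i k ≤ θ * (D' i j * D' i k) := by
                  rw [mul_assoc]
                  exact mul_le_mul_of_nonneg_right (hsθ i)
                    (mul_nonneg (hD'0 i j) (hD'0 i k))
                calc |ss (M.ρ i)| * D' i j * D' i k / M.e i
                    ≤ θ * (D' i j * D' i k) / M.e i := by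
                      apply div_le_div_of_nonneg_right h2 (M.e_pos i).le
                  _ = θ * (D' i j * D' i k / M.e i) := by ring
        calc |∑ i, ss (M.ρ i) * D' i j * D' i k / M.e i| * p k
            ≤ (∑ i, θ * (D' i j * D' i k / M.e i)) * p k :=
              mul_le_mul_of_nonneg_right step1 (hp k).le
          _ = ∑ i, θ * (D' i j / M.e i) * (D' i k * p k) := by
              rw [Finset.sum_mul]
              exact Finset.sum_congr rfl (fun i _ => by ring)
    _ = ∑ i, θ * (D' i j / M.e i) * (∑ k ∈ Finset.univ.erase j, D' i k * p k) := by
        rw [Finset.sum_comm]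
        exact Finset.sum_congr rfl (fun i _ => by rw [← Finset.mul_sum])
    _ ≤ ∑ i, θ * (D' i j / M.e i) * (r * M.e i) := by
        refine Finset.sum_le_sum (fun i _ => ?_)
        refine mul_le_mul_of_nonneg_left (hspend i) ?_
        exact mul_nonneg (by linarith : (0:ℝ) ≤ θ) (div_nonneg (hD'0 i j) (M.e_pos i).le)
    _ = ∑ i, (θ * r) * D' i j := by
        refine Finset.sum_congr rfl (fun i _ => ?_)
        have hei : M.e i ≠ 0 := (M.e_pos i).ne'
        field_simp
    _ ≤ ∑ i, (θ * r) * (r ^ (2*E - 1) * D i j) := by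
        refine Finset.sum_le_sum (fun i _ => ?_)
        refine mul_le_mul_of_nonneg_left (hratio i) ?_
        exact mul_nonneg (by linarith : (0:ℝ) ≤ θ) hr0.le
    _ = θ * r ^ (2 * E) * totalDemand M p j := by
        rw [htot, Finset.mul_sum]
        refine Finset.sum_congr rfl (fun i _ => ?_)
        have hrr : r * r ^ (2*E - 1) = r ^ (2*E) := by
          have h := Real.rpow_add hr0 1 (2*E - 1)
          rw [Real.rpow_one] at h
          rw [← h]
          norm_num
        calc θ * r * (r ^ (2*E - 1) * D i j) = θ * (r * r ^ (2*E - 1)) * D i j := by ring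
          _ = θ * r ^ (2*E) * D i j := by rw [hrr]
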